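/- (Remark: non-monotonicity of standard Nyström.) Let K be the 3×3 symmetric matrix with rows (1, 0, 10), (0, 1.01, 0), (10, 0, 100). Then K is positive semidefinite. For r = 1: (i) using only the first column, with C₁ = (1, 0, 10)ᵀ and W₁ = [1], the standard Nyström rank-1 approximation is G₁ = C₁ C₁ᵀ, and it satisfies trace(K − G₁) = 1.01 and ‖K − G₁‖_F = 1.01; (ii) using the first two columns, with C₂ the 3×2 matrix of the first two columns of K and W₂ = diag(1, 1.01), the standard Nyström rank-1 approximation is G₂ = C₂ M C₂ᵀ with M = diag(0, 1/1.01) (the pseudo-inverse of the best rank-1 approximation of W₂), and K − G₂ is positive semidefinite with trace(K − G₂) = 101 and ‖K − G₂‖_F > 100. Hence trace(K − G₂) > trace(K − G₁) and ‖K − G₂‖_F > ‖K − G₁‖_F: adding a landmark point strictly worsens the standard Nyström rank-1 approximation in both trace and Frobenius norms. -/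

import Mathlib

open Matrix

/-- Frobenius norm of a real matrix: ‖A‖_F = sqrt(trace(Aᵀ A)). -/
noncomputable def frobNorm {α β : Type*} [Fintype α] [Fintype β] (A : Matrix α β ℝ) : ℝ :=
  Real.sqrt (Matrix.trace (Aᵀ * A))

/-- The 3×3 kernel matrix of the non-monotonicity example. -/
def K11 : Matrix (Fin 3) (Fin 3) ℝ :=
  !![1, 0, 10;
     0, 1.01, 0;
     10, 0, 100]

/-- The first column of K. -/
def C1 : Matrix (Fin 3) (Fin 1) ℝ := !![1; 0; 10]

/-- The first two columns of K. -/
def C2 : Matrix (Fin 3) (Fin 2) ℝ :=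
  !![1, 0;
     0, 1.01;
     10, 0]

/-- The pseudo-inverse of the best rank-1 approximation of W₂ = diag(1, 1.01). -/
noncomputable def M11 : Matrix (Fin 2) (Fin 2) ℝ := !![0, 0; 0, (1.01 : ℝ)⁻¹]

lemma D1_eq : K11 - C1 * C1ᵀ = !![0,0,0;0,1.01,0;0,0,0] := by
  ext i j
  fin_cases i <;> fin_cases j <;>
    norm_num [K11, C1, Matrix.mul_apply, Fin.sum_univ_succ, Matrix.vecHead, Matrix.vecTail, Matrix.transpose_apply, Matrix.vecMul, dotProduct]

lemma D2_eq : K11 - C2 * M11 * C2ᵀ = !![1,0,10;0,0,0;10,0,100] := by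
  ext i j
  fin_cases i <;> fin_cases j <;>
    simp [K11, C2, M11, Matrix.mul_apply, Fin.sum_univ_succ, Matrix.vecHead, Matrix.vecTail, Matrix.transpose_apply, Matrix.vecMul, dotProduct]

/-- Non-monotonicity of the standard Nyström method: adding a landmark point strictly worsens
the rank-1 approximation in both trace and Frobenius norms. -/
theorem stmt_11 :
    K11.PosSemidef ∧
    Matrix.trace (K11 - C1 * C1ᵀ) = 1.01 ∧
    frobNorm (K11 - C1 * C1ᵀ) = 1.01 ∧
    (K11 - C2 * M11 * C2ᵀ).PosSemidef ∧
    Matrix.trace (K11 - C2 * M11 * C2ᵀ) = 101 ∧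
    frobNorm (K11 - C2 * M11 * C2ᵀ) > 100 ∧
    Matrix.trace (K11 - C2 * M11 * C2ᵀ) > Matrix.trace (K11 - C1 * C1ᵀ) ∧
    frobNorm (K11 - C2 * M11 * C2ᵀ) > frobNorm (K11 - C1 * C1ᵀ) := by
  have htr1 : Matrix.trace (K11 - C1 * C1ᵀ) = 1.01 := by
    rw [D1_eq]; norm_num [Matrix.trace_fin_three, Matrix.vecHead, Matrix.vecTail, Function.comp, Matrix.cons_val_two]
  have hf1 : frobNorm (K11 - C1 * C1ᵀ) = 1.01 := by
    rw [D1_eq, frobNorm]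
    have : Matrix.trace ((!![0,0,0;0,(1.01:ℝ),0;0,0,0])ᵀ * !![0,0,0;0,1.01,0;0,0,0]) = 1.01^2 := by
      norm_num [Matrix.trace_fin_three, Matrix.mul_apply, Fin.sum_univ_succ, Matrix.vecHead, Matrix.vecTail, Matrix.transpose_apply, Matrix.cons_val_two]
    rw [this, Real.sqrt_sq (by norm_num)]
  have htr2 : Matrix.trace (K11 - C2 * M11 * C2ᵀ) = 101 := by
    rw [D2_eq]; norm_num [Matrix.trace_fin_three, Matrix.cons_val_two]
  have hf2 : frobNorm (K11 - C2 * M11 * C2ᵀ) = 101 := by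
    rw [D2_eq, frobNorm]
    have : Matrix.trace ((!![1,0,10;0,0,0;10,0,(100:ℝ)])ᵀ * !![1,0,10;0,0,0;10,0,100]) = 101^2 := by
      norm_num [Matrix.trace_fin_three, Matrix.mul_apply, Fin.sum_univ_succ, Matrix.vecHead, Matrix.vecTail, Matrix.transpose_apply, Matrix.cons_val_two]
    rw [this, Real.sqrt_sq (by norm_num)]
  refine ⟨?_, htr1, hf1, ?_, htr2, by rw [hf2]; norm_num, by rw [htr1, htr2]; norm_num,
    by rw [hf1, hf2]; norm_num⟩
  · rw [Matrix.posSemidef_iff_dotProduct_mulVec]; constructor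
    · ext i j; fin_cases i <;> fin_cases j <;> norm_num [K11, Matrix.transpose_apply, Matrix.conjTranspose_apply, Matrix.vecHead, Matrix.vecTail]
    · intro x
      have : star x ⬝ᵥ K11 *ᵥ x = (x 0 + 10 * x 2)^2 + 1.01 * (x 1)^2 := by
        simp [K11, dotProduct, Matrix.mulVec, Fin.sum_univ_succ]
        ring
      rw [this]; positivity
  · rw [D2_eq]
    rw [Matrix.posSemidef_iff_dotProduct_mulVec]; constructor
    · ext i j; fin_cases i <;> fin_cases j <;> norm_num [Matrix.transpose_apply, Matrix.conjTranspose_apply, Matrix.vecHead, Matrix.vecTail]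
    · intro x
      have : star x ⬝ᵥ !![1,0,10;0,0,0;10,0,(100:ℝ)] *ᵥ x = (x 0 + 10 * x 2)^2 := by
        simp [dotProduct, Matrix.mulVec, Fin.sum_univ_succ]
        ring
      rw [this]; positivity
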